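/- (Main theorem, combined correctness of relative select.) Let C be a common subsequence of S₁ and S₂ witnessed by strictly increasing character-preserving maps f (into S₁) and g (into S₂). With D the subsequence of S₂ at positions outside im(g), B, B_x the marking bitvectors of im(f) within S₁ and its x-occurrences, and B', B'_x the marking bitvectors of im(g) within S₂ and its x-occurrences, for every character x and every i with 1 ≤ i ≤ occ(x, S₂): select_x(S₂, i) = select₀(B', rank₀(B, select_x(S₁, select₀(B_x, rank₀(B'_x, i))))) if B'_x[i] = 0, and select_x(S₂, i) = select₁(B', select_x(D, rank₁(B'_x, i))) if B'_x[i] = 1. -/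

import Mathlib

namespace RS

variable {α : Type*} [DecidableEq α]

/-- 1-indexed position of the `j`-th occurrence of `a` in `S` (junk value if out of range). -/
def sel (a : α) (S : List α) (j : ℕ) : ℕ :=
  (((List.range S.length).filter (fun p => decide (S[p]? = some a))).getD (j - 1) 0) + 1

/-- Number of occurrences of `a` among the first `i` characters of `S` (1-indexed). -/
def rank (a : α) (S : List α) (i : ℕ) : ℕ := (S.take i).count a

/-- Total number of occurrences of `a` in `S`. -/
def occ (a : α) (S : List α) : ℕ := S.count a

def rank0 (B : List Bool) (i : ℕ) : ℕ := (B.take i).count false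
def rank1 (B : List Bool) (i : ℕ) : ℕ := (B.take i).count true
def sel0 (B : List Bool) (i : ℕ) : ℕ := sel false B i
def sel1 (B : List Bool) (i : ℕ) : ℕ := sel true B i

/-- `f` is a strictly increasing, character-preserving embedding of `S₂` into `S₁`
(all positions 1-indexed). -/
def Emb (S₂ S₁ : List α) (f : ℕ → ℕ) : Prop :=
  (∀ j, 1 ≤ j → j ≤ S₂.length → 1 ≤ f j ∧ f j ≤ S₁.length) ∧
  (∀ j k, 1 ≤ j → j < k → k ≤ S₂.length → f j < f k) ∧
  (∀ j, 1 ≤ j → j ≤ S₂.length → S₂[j - 1]? = S₁[f j - 1]?)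

/-- Is the 1-indexed position `p` in the image `{f 1, …, f m}`? -/
def inIm (m : ℕ) (f : ℕ → ℕ) (p : ℕ) : Bool :=
  (List.range m).any (fun j => f (j + 1) == p)

/-- Bitvector of length `n` marking with `true` (`1`) the 1-indexed positions
outside the image `{f 1, …, f m}`. -/
def markB (n m : ℕ) (f : ℕ → ℕ) : List Bool :=
  (List.range n).map (fun p => !inIm m f (p + 1))

/-- Bitvector of length `occ x S` whose `i`-th bit is `true` (`1`) iff the position
of the `i`-th occurrence of `x` in `S` is outside the image `{f 1, …, f m}`. -/
def markBx (x : α) (S : List α) (m : ℕ) (f : ℕ → ℕ) : List Bool :=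
  (List.range (occ x S)).map (fun i => !inIm m f (sel x S (i + 1)))

/-- The subsequence of `S` consisting of the characters at positions outside
the image `{g 1, …, g m}`, in order. -/
def delIm (S : List α) (m : ℕ) (g : ℕ → ℕ) : List α :=
  (List.range S.length).filterMap (fun p => if inIm m g (p + 1) then none else S[p]?)

lemma sorted_filter_lt : ∀ (L : List ℕ), L.Pairwise (· < ·) →
    ∀ (k : ℕ) (hk : k < L.length), L.filter (fun q => decide (q < L[k] + 1)) = L.take (k+1) := by
  intro L
  induction L with
  | nil => intro _ k hk; simp at hk
  | cons a L ih =>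
    intro hL k hk
    have h1 : ∀ b ∈ L, a < b := (List.pairwise_cons.mp hL).1
    have h2 := (List.pairwise_cons.mp hL).2
    cases k with
    | zero =>
      simp only [List.getElem_cons_zero, List.take_succ_cons, List.take_zero]
      rw [List.filter_cons_of_pos (by simp)]
      rw [List.filter_eq_nil_iff.mpr]
      intro b hb
      simp only [decide_eq_true_eq]
      exact fun h => absurd (h1 b hb) (by omega)
    | succ k =>
      have hk' : k < L.length := by simpa using hk
      have hmem : L[k] ∈ L := List.getElem_mem hk'
      simp only [List.getElem_cons_succ, List.take_succ_cons]
      rw [List.filter_cons_of_pos (by simp; exact by have := h1 _ hmem; omega)]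
      rw [ih h2 k hk']

lemma getD_filter_lt (L : List ℕ) (hL : L.Pairwise (· < ·)) (q : ℕ) (hq : q ∈ L) :
    L.getD ((L.filter (fun r => decide (r < q + 1))).length - 1) 0 = q := by
  obtain ⟨k, hk, rfl⟩ := List.mem_iff_getElem.mp hq
  rw [sorted_filter_lt L hL k hk, List.length_take]
  have : min (k+1) L.length = k + 1 := by omega
  rw [this]
  simp only [Nat.add_sub_cancel]
  exact List.getD_eq_getElem L 0 hk

def posL (a : α) (S : List α) : List ℕ :=
  (List.range S.length).filter (fun p => decide (S[p]? = some a))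

lemma posL_pairwise (a : α) (S : List α) : (posL a S).Pairwise (· < ·) :=
  List.Pairwise.filter _ (List.pairwise_lt_range)

lemma mem_posL {a : α} {S : List α} {p : ℕ} : p ∈ posL a S ↔ S[p]? = some a := by
  unfold posL
  simp only [List.mem_filter, List.mem_range, decide_eq_true_eq]
  constructor
  · exact fun h => h.2
  · intro h
    exact ⟨by have := List.getElem?_eq_some_iff.mp h; exact this.1, h⟩

lemma sel_eq_getD (a : α) (S : List α) (j : ℕ) :
    sel a S j = (posL a S).getD (j-1) 0 + 1 := rfl

lemma rank_eq_filter (a : α) : ∀ (S : List α) (i : ℕ),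
    rank a S i = ((List.range S.length).filter
      (fun p => decide (S[p]? = some a) && decide (p < i))).length := by
  intro S
  induction S with
  | nil => intro i; simp [rank]
  | cons b T ih =>
    intro i
    cases i with
    | zero =>
      simp only [rank, List.take_zero, List.count_nil]
      rw [List.filter_eq_nil_iff.mpr (by intro p _; simp)]
      rfl
    | succ i =>
      have hr : List.range (T.length + 1) = 0 :: List.map Nat.succ (List.range T.length) :=
        List.range_succ_eq_map
      simp only [rank, List.take_succ_cons, List.count_cons, List.length_cons, hr]
      rw [List.filter_cons, List.filter_map]
      have hcongr : (List.range T.length).filter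
          ((fun p => decide ((b::T)[p]? = some a) && decide (p < i+1)) ∘ Nat.succ)
          = (List.range T.length).filter (fun p => decide (T[p]? = some a) && decide (p < i)) := by
        apply List.filter_congr
        intro p _
        simp only [Function.comp]
        congr 1
        · simp [List.getElem?_cons_succ, Nat.succ_eq_add_one]
      rw [hcongr]
      have hhead : (decide ((b::T)[0]? = some a) && decide ((0:ℕ) < i+1)) = decide (b = a) := by
        simp
      rw [hhead]
      have := ih i
      by_cases hba : b = a <;> simp [hba, rank] at this ⊢ <;> omega

lemma rank_eq_posL (a : α) (S : List α) (i : ℕ) :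
    rank a S i = ((posL a S).filter (fun q => decide (q < i))).length := by
  rw [rank_eq_filter, posL, List.filter_filter]
  congr 1
  apply List.filter_congr
  intro p _
  exact Bool.and_comm _ _

lemma occ_eq_posL (a : α) (S : List α) : occ a S = (posL a S).length := by
  have h1 : occ a S = rank a S S.length := by
    simp [occ, rank, List.take_length]
  rw [h1, rank_eq_posL]
  congr 1
  apply List.filter_eq_self.mpr
  intro q hq
  have := mem_posL.mp hq
  have := (List.getElem?_eq_some_iff.mp this).1
  simpa


lemma sel_spec (a : α) (S : List α) (j : ℕ) (h1 : 1 ≤ j) (h2 : j ≤ occ a S) :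
    S[sel a S j - 1]? = some a ∧ rank a S (sel a S j) = j ∧ sel a S j ≤ S.length := by
  have hlen : j - 1 < (posL a S).length := by rw [← occ_eq_posL]; omega
  have hq : sel a S j = (posL a S)[j-1] + 1 := by
    rw [sel_eq_getD, List.getD_eq_getElem _ _ hlen]
  have hmem : (posL a S)[j-1] ∈ posL a S := List.getElem_mem hlen
  have hx := mem_posL.mp hmem
  refine ⟨by simpa [hq], ?_, ?_⟩
  · rw [hq, rank_eq_posL, sorted_filter_lt _ (posL_pairwise a S) _ hlen, List.length_take]
    rw [← occ_eq_posL]; omega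
  · have := (List.getElem?_eq_some_iff.mp hx).1; omega

lemma rank_spec (a : α) (S : List α) (p : ℕ) (h1 : 1 ≤ p) (hx : S[p-1]? = some a) :
    sel a S (rank a S p) = p ∧ 1 ≤ rank a S p ∧ rank a S p ≤ occ a S := by
  have hmem : p - 1 ∈ posL a S := mem_posL.mpr hx
  have hp : p - 1 + 1 = p := by omega
  have hsel : sel a S (rank a S p) = p := by
    rw [sel_eq_getD, rank_eq_posL]
    have h := getD_filter_lt (posL a S) (posL_pairwise a S) (p-1) hmem
    rw [hp] at h
    rw [h, hp]
  refine ⟨hsel, ?_, ?_⟩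
  · rw [rank_eq_posL]
    have hmem2 : p - 1 ∈ (posL a S).filter (fun q => decide (q < p)) := by
      rw [List.mem_filter]
      exact ⟨hmem, by simp; omega⟩
    have := List.ne_nil_of_mem hmem2
    exact List.length_pos_iff.mpr this
  · rw [rank_eq_posL, occ_eq_posL]; exact List.length_filter_le _ _

lemma sel_strict_mono (a : α) (S : List α) {j k : ℕ} (h1 : 1 ≤ j) (hjk : j < k)
    (hk : k ≤ occ a S) : sel a S j < sel a S k := by
  have hlj : j - 1 < (posL a S).length := by rw [← occ_eq_posL]; omega
  have hlk : k - 1 < (posL a S).length := by rw [← occ_eq_posL]; omega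
  have := List.pairwise_iff_getElem.mp (posL_pairwise a S) (j-1) (k-1) hlj hlk (by omega)
  rw [sel_eq_getD, sel_eq_getD, List.getD_eq_getElem _ _ hlj, List.getD_eq_getElem _ _ hlk]
  omega

lemma rank_mono (a : α) (S : List α) {i i' : ℕ} (h : i ≤ i') : rank a S i ≤ rank a S i' := by
  unfold rank
  have hsub : List.Sublist (S.take i) (S.take i') := by
    have heq : S.take i = (S.take i').take i := by rw [List.take_take]; congr 1; omega
    rw [heq]; exact List.take_sublist _ _
  exact hsub.count_le a

lemma rank_succ_occ (a : α) (S : List α) (p : ℕ) (h1 : 1 ≤ p) (hx : S[p-1]? = some a) :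
    rank a S p = rank a S (p-1) + 1 := by
  have hp : p - 1 + 1 = p := by omega
  unfold rank
  rw [← hp, List.take_succ, hx]
  simp

lemma rank_strict (a : α) (S : List α) {p p' : ℕ} (h1 : p ≤ p' - 1) (h2 : 1 ≤ p')
    (hx : S[p'-1]? = some a) : rank a S p < rank a S p' := by
  have h3 := rank_succ_occ a S p' h2 hx
  have h4 := rank_mono a S (i := p) (i' := p'-1) h1
  omega



lemma sorted_ext {L M : List ℕ} (hL : L.Pairwise (· < ·)) (hM : M.Pairwise (· < ·))
    (h : ∀ q, q ∈ L ↔ q ∈ M) : L = M := by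
  have : IsAntisymm ℕ (· < ·) := ⟨fun a b h1 h2 => by omega⟩
  refine List.Perm.eq_of_pairwise' hL hM ?_
  exact (List.perm_ext_iff_of_nodup
    (hL.imp (fun {a b} h => Nat.ne_of_lt h))
    (hM.imp (fun {a b} h => Nat.ne_of_lt h))).mpr h

lemma inIm_iff {m : ℕ} {f : ℕ → ℕ} {p : ℕ} :
    inIm m f p = true ↔ ∃ j, 1 ≤ j ∧ j ≤ m ∧ f j = p := by
  unfold inIm
  rw [List.any_eq_true]
  constructor
  · rintro ⟨j, hj, hbeq⟩
    rw [List.mem_range] at hj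
    exact ⟨j+1, by omega, by omega, by simpa using hbeq⟩
  · rintro ⟨j, h1, h2, h3⟩
    refine ⟨j-1, List.mem_range.mpr (by omega), ?_⟩
    rw [show j-1+1 = j by omega]
    simpa using h3

lemma markB_length (n m : ℕ) (f : ℕ → ℕ) : (markB n m f).length = n := by
  simp [markB]

lemma markB_getElem? {n : ℕ} (m : ℕ) (f : ℕ → ℕ) {p : ℕ} (hp : p < n) :
    (markB n m f)[p]? = some (!inIm m f (p+1)) := by
  simp [markB, List.getElem?_map, List.getElem?_range hp]

lemma posL_markB (n m : ℕ) (f : ℕ → ℕ) (b : Bool) :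
    posL b (markB n m f) = (List.range n).filter (fun p => (!inIm m f (p+1)) == b) := by
  unfold posL
  rw [markB_length]
  apply List.filter_congr
  intro p hp
  rw [List.mem_range] at hp
  rw [markB_getElem? m f hp]
  simp only [Option.some_inj]
  cases inIm m f (p+1) <;> cases b <;> rfl

lemma markBx_length (x : α) (S : List α) (m : ℕ) (f : ℕ → ℕ) :
    (markBx x S m f).length = occ x S := by simp [markBx]

lemma markBx_getElem? {x : α} {S : List α} (m : ℕ) (f : ℕ → ℕ) {i : ℕ} (hi : i < occ x S) :
    (markBx x S m f)[i]? = some (!inIm m f (sel x S (i+1))) := by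
  simp [markBx, List.getElem?_map, List.getElem?_range hi]

lemma posL_markBx (x : α) (S : List α) (m : ℕ) (f : ℕ → ℕ) (b : Bool) :
    posL b (markBx x S m f)
      = (List.range (occ x S)).filter (fun i => (!inIm m f (sel x S (i+1))) == b) := by
  unfold posL
  rw [markBx_length]
  apply List.filter_congr
  intro i hi
  rw [List.mem_range] at hi
  rw [markBx_getElem? m f hi]
  simp only [Option.some_inj]
  cases inIm m f (sel x S (i+1)) <;> cases b <;> rfl


lemma sorted_map_f {C S : List α} {f : ℕ → ℕ} (hf : Emb C S f) :
    ((List.range C.length).map (fun j => f (j+1) - 1)).Pairwise (· < ·) := by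
  rw [List.pairwise_iff_getElem]
  intro i j hi hj hij
  simp only [List.length_map, List.length_range] at hi hj
  simp only [List.getElem_map, List.getElem_range]
  have h1 := hf.2.1 (i+1) (j+1) (by omega) (by omega) (by omega)
  have h2 := (hf.1 (i+1) (by omega) (by omega)).1
  omega

lemma posL_false_markB {C S : List α} {f : ℕ → ℕ} (hf : Emb C S f) :
    posL false (markB S.length C.length f)
      = (List.range C.length).map (fun j => f (j+1) - 1) := by
  obtain ⟨hb, hm, hc⟩ := hf
  rw [posL_markB]
  apply sorted_ext
  · exact List.Pairwise.filter _ (List.pairwise_lt_range)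
  · exact sorted_map_f ⟨hb, hm, hc⟩
  · intro q
    simp only [List.mem_filter, List.mem_range, List.mem_map]
    constructor
    · rintro ⟨hq, hin⟩
      have hin' : inIm C.length f (q+1) = true := by
        cases h : inIm C.length f (q+1)
        · rw [h] at hin; simp at hin
        · rfl
      obtain ⟨j, h1, h2, h3⟩ := inIm_iff.mp hin'
      exact ⟨j-1, by omega, by rw [show j-1+1 = j by omega]; omega⟩
    · rintro ⟨j, hj, rfl⟩
      have hbj := hb (j+1) (by omega) (by omega)
      refine ⟨by omega, ?_⟩
      have : inIm C.length f (f (j+1) - 1 + 1) = true :=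
        inIm_iff.mpr ⟨j+1, by omega, by omega, by omega⟩
      rw [this]
      rfl

lemma sel0_markB {C S : List α} {f : ℕ → ℕ} (hf : Emb C S f) {j : ℕ}
    (h1 : 1 ≤ j) (h2 : j ≤ C.length) :
    sel0 (markB S.length C.length f) j = f j := by
  have hL := posL_false_markB hf
  show sel false _ j = f j
  rw [sel_eq_getD, hL]
  have hlen : j - 1 < ((List.range C.length).map (fun j => f (j+1) - 1)).length := by
    simp only [List.length_map, List.length_range]; omega
  rw [List.getD_eq_getElem _ _ hlen]
  simp only [List.getElem_map, List.getElem_range]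
  have := (hf.1 j h1 h2).1
  rw [show j-1+1 = j by omega]
  omega

lemma rank0_markB {C S : List α} {f : ℕ → ℕ} (hf : Emb C S f) {j : ℕ}
    (h1 : 1 ≤ j) (h2 : j ≤ C.length) :
    rank0 (markB S.length C.length f) (f j) = j := by
  have hL := posL_false_markB hf
  show rank false _ (f j) = j
  rw [rank_eq_posL, hL]
  have hlen : j - 1 < ((List.range C.length).map (fun j => f (j+1) - 1)).length := by
    simp only [List.length_map, List.length_range]; omega
  have hval : ((List.range C.length).map (fun j => f (j+1) - 1))[j-1] = f j - 1 := by
    simp only [List.getElem_map, List.getElem_range]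
    rw [show j-1+1 = j by omega]
  have hge := (hf.1 j h1 h2).1
  have hfj : f j = ((List.range C.length).map (fun j => f (j+1) - 1))[j-1] + 1 := by
    rw [hval]; omega
  rw [hfj, sorted_filter_lt _ (sorted_map_f hf) _ hlen, List.length_take]
  simp only [List.length_map, List.length_range]
  omega


lemma emb_occ_facts {C S : List α} {f : ℕ → ℕ} (hf : Emb C S f) {x : α} {t : ℕ}
    (h1 : 1 ≤ t) (h2 : t ≤ occ x C) :
    1 ≤ sel x C t ∧ sel x C t ≤ C.length ∧ S[f (sel x C t) - 1]? = some x ∧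
    1 ≤ f (sel x C t) ∧ f (sel x C t) ≤ S.length ∧
    1 ≤ rank x S (f (sel x C t)) ∧ rank x S (f (sel x C t)) ≤ occ x S ∧
    sel x S (rank x S (f (sel x C t))) = f (sel x C t) := by
  obtain ⟨hC1, hC2, hC3⟩ := sel_spec x C t h1 h2
  have hj1 : 1 ≤ sel x C t := by unfold sel; omega
  have hfb := hf.1 _ hj1 hC3
  have hchar : S[f (sel x C t) - 1]? = some x := by rw [← hf.2.2 _ hj1 hC3]; exact hC1
  obtain ⟨hr1, hr2, hr3⟩ := rank_spec x S _ hfb.1 hchar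
  exact ⟨hj1, hC3, hchar, hfb.1, hfb.2, hr2, hr3, hr1⟩

lemma sorted_rankmap {C S : List α} {f : ℕ → ℕ} (hf : Emb C S f) (x : α) :
    ((List.range (occ x C)).map (fun t => rank x S (f (sel x C (t+1))) - 1)).Pairwise (· < ·) := by
  rw [List.pairwise_iff_getElem]
  intro t t' ht ht' htt
  simp only [List.length_map, List.length_range] at ht ht'
  simp only [List.getElem_map, List.getElem_range]
  obtain ⟨_, hjm, hx', hf1, _, hr1, _, _⟩ := emb_occ_facts hf (x := x) (t := t+1) (by omega) (by omega)
  obtain ⟨hj1', hjm', hx'', hf1', _, hr1', _, _⟩ := emb_occ_facts hf (x := x) (t := t'+1) (by omega) (by omega)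
  have hjj : sel x C (t+1) < sel x C (t'+1) := sel_strict_mono x C (by omega) (by omega) (by omega)
  have hff : f (sel x C (t+1)) < f (sel x C (t'+1)) := hf.2.1 _ _ (by omega) hjj hjm'
  have := rank_strict x S (p := f (sel x C (t+1))) (p' := f (sel x C (t'+1))) (by omega) (by omega) hx''
  omega

lemma posL_false_markBx {C S : List α} {f : ℕ → ℕ} (hf : Emb C S f) (x : α) :
    posL false (markBx x S C.length f)
      = (List.range (occ x C)).map (fun t => rank x S (f (sel x C (t+1))) - 1) := by
  rw [posL_markBx]
  apply sorted_ext
  · exact List.Pairwise.filter _ (List.pairwise_lt_range)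
  · exact sorted_rankmap hf x
  · intro q
    simp only [List.mem_filter, List.mem_range, List.mem_map]
    constructor
    · rintro ⟨hq, hin⟩
      have hin' : inIm C.length f (sel x S (q+1)) = true := by
        cases h : inIm C.length f (sel x S (q+1))
        · rw [h] at hin; simp at hin
        · rfl
      obtain ⟨j, hj1, hj2, hj3⟩ := inIm_iff.mp hin'
      obtain ⟨hS1, hS2, hS3⟩ := sel_spec x S (q+1) (by omega) (by omega)
      have hCx : C[j-1]? = some x := by
        rw [hf.2.2 j hj1 hj2, hj3]; exact hS1
      obtain ⟨hc1, hc2, hc3⟩ := rank_spec x C j hj1 hCx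
      refine ⟨rank x C j - 1, by omega, ?_⟩
      rw [show rank x C j - 1 + 1 = rank x C j by omega, hc1, hj3, hS2]
      omega
    · rintro ⟨t, ht, rfl⟩
      obtain ⟨hj1, hjm, hxS, hf1, hfn, hr1, hr2, hrsel⟩ :=
        emb_occ_facts hf (x := x) (t := t+1) (by omega) (by omega)
      refine ⟨by omega, ?_⟩
      rw [show rank x S (f (sel x C (t+1))) - 1 + 1 = rank x S (f (sel x C (t+1))) by omega, hrsel]
      have : inIm C.length f (f (sel x C (t+1))) = true :=
        inIm_iff.mpr ⟨sel x C (t+1), hj1, hjm, rfl⟩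
      rw [this]; rfl

lemma sel0_markBx {C S : List α} {f : ℕ → ℕ} (hf : Emb C S f) {x : α} {t : ℕ}
    (h1 : 1 ≤ t) (h2 : t ≤ occ x C) :
    sel0 (markBx x S C.length f) t = rank x S (f (sel x C t)) := by
  show sel false _ t = _
  rw [sel_eq_getD, posL_false_markBx hf x]
  have hlen : t - 1 < ((List.range (occ x C)).map (fun t => rank x S (f (sel x C (t+1))) - 1)).length := by
    simp only [List.length_map, List.length_range]; omega
  rw [List.getD_eq_getElem _ _ hlen]
  simp only [List.getElem_map, List.getElem_range]
  rw [show t-1+1 = t by omega]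
  obtain ⟨_, _, _, _, _, hr1, _, _⟩ := emb_occ_facts hf (x := x) h1 h2
  omega

lemma rank0_markBx {C S : List α} {f : ℕ → ℕ} (hf : Emb C S f) {x : α} {j : ℕ}
    (h1 : 1 ≤ j) (h2 : j ≤ C.length) (hCx : C[j-1]? = some x) :
    rank0 (markBx x S C.length f) (rank x S (f j)) = rank x C j := by
  obtain ⟨hs1, hs2, hs3⟩ := rank_spec x C j h1 hCx
  show rank false _ _ = _
  rw [rank_eq_posL, posL_false_markBx hf x]
  have hlen : rank x C j - 1 <
      ((List.range (occ x C)).map (fun t => rank x S (f (sel x C (t+1))) - 1)).length := by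
    simp only [List.length_map, List.length_range]; omega
  have hval : ((List.range (occ x C)).map (fun t => rank x S (f (sel x C (t+1))) - 1))[rank x C j - 1]
      = rank x S (f j) - 1 := by
    simp only [List.getElem_map, List.getElem_range]
    rw [show rank x C j - 1 + 1 = rank x C j by omega, hs1]
  obtain ⟨_, _, _, _, _, hr1, _, _⟩ := emb_occ_facts hf (x := x) hs2 hs3
  rw [hs1] at hr1
  have hfj : rank x S (f j)
      = ((List.range (occ x C)).map (fun t => rank x S (f (sel x C (t+1))) - 1))[rank x C j - 1] + 1 := by
    rw [hval]; omega
  rw [hfj, sorted_filter_lt _ (sorted_rankmap hf x) _ hlen, List.length_take]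
  simp only [List.length_map, List.length_range]
  omega


lemma filterMap_eq_map_filter (S : List α) (c : ℕ → Bool) (d : α) :
    ∀ (L : List ℕ), (∀ p ∈ L, p < S.length) →
    (L.filterMap (fun p => if c p then none else S[p]?)
      = (L.filter (fun p => (!c p) == true)).map (fun p => S.getD p d)) := by
  intro L
  induction L with
  | nil => simp
  | cons a L ih =>
    intro hb
    have ha : a < S.length := hb a (List.mem_cons_self)
    have htail := ih (fun p hp => hb p (List.mem_cons_of_mem _ hp))
    have hsome : S[a]? = some (S.getD a d) := by
      rw [List.getElem?_eq_getElem ha, List.getD_eq_getElem _ _ ha]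
    rw [List.filterMap_cons, List.filter_cons]
    cases hc : c a
    · simp only [hc, Bool.false_eq_true, if_false, hsome, Bool.not_false, beq_self_eq_true, if_true,
        List.filterMap_cons, List.map_cons]
      rw [htail]
    · simp only [hc, if_true, Bool.not_true]
      rw [htail]
      simp

lemma delIm_eq (S : List α) (m : ℕ) (g : ℕ → ℕ) (d : α) :
    delIm S m g = (posL true (markB S.length m g)).map (fun p => S.getD p d) := by
  unfold delIm
  rw [posL_markB]
  exact filterMap_eq_map_filter S (fun p => inIm m g (p+1)) d (List.range S.length)
    (fun p hp => List.mem_range.mp hp)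

lemma posL_true_markBx (x : α) (S : List α) (m : ℕ) (g : ℕ → ℕ) :
    posL true (markBx x S m g)
      = ((List.range S.length).filter
          (fun q => decide (S[q]? = some x) && ((!inIm m g (q+1)) == true))).map
        (fun q => rank x S (q+1) - 1) := by
  rw [posL_markBx]
  set QT := (List.range S.length).filter
      (fun q => decide (S[q]? = some x) && ((!inIm m g (q+1)) == true)) with hQT
  have hQTs : QT.Pairwise (· < ·) := List.Pairwise.filter _ (List.pairwise_lt_range)
  have hQTmem : ∀ q ∈ QT, q < S.length ∧ S[q]? = some x ∧ ((!inIm m g (q+1)) == true) = true := by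
    intro q hq
    rw [hQT, List.mem_filter, List.mem_range] at hq
    refine ⟨hq.1, ?_, ?_⟩
    · have := hq.2; simp only [Bool.and_eq_true, decide_eq_true_eq] at this; exact this.1
    · have := hq.2; simp only [Bool.and_eq_true] at this; exact this.2
  apply sorted_ext
  · exact List.Pairwise.filter _ (List.pairwise_lt_range)
  · rw [List.pairwise_map]
    refine List.Pairwise.imp_of_mem ?_ hQTs
    intro q q' hq hq' hlt
    obtain ⟨hn, hx', _⟩ := hQTmem q hq
    obtain ⟨hn', hx'', _⟩ := hQTmem q' hq'
    have hr1 : 1 ≤ rank x S (q+1) := (rank_spec x S (q+1) (by omega) (by simpa using hx')).2.1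
    have := rank_strict x S (p := q+1) (p' := q'+1) (by omega) (by omega) (by simpa using hx'')
    omega
  · intro t
    simp only [List.mem_filter, List.mem_range, List.mem_map]
    constructor
    · rintro ⟨ht, hin⟩
      obtain ⟨hS1, hS2, hS3⟩ := sel_spec x S (t+1) (by omega) (by omega)
      have hsel1 : 1 ≤ sel x S (t+1) := by unfold sel; omega
      refine ⟨sel x S (t+1) - 1, ?_, ?_⟩
      · rw [hQT, List.mem_filter, List.mem_range]
        refine ⟨by omega, ?_⟩
        rw [show sel x S (t+1) - 1 + 1 = sel x S (t+1) by omega]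
        simp only [Bool.and_eq_true, decide_eq_true_eq]
        exact ⟨hS1, hin⟩
      · rw [show sel x S (t+1) - 1 + 1 = sel x S (t+1) by omega, hS2]
        omega
    · rintro ⟨q, hq, rfl⟩
      obtain ⟨hn, hx', hin⟩ := hQTmem q hq
      obtain ⟨hr1, hr2, hr3⟩ := rank_spec x S (q+1) (by omega) (by simpa using hx')
      refine ⟨by omega, ?_⟩
      rw [show rank x S (q+1) - 1 + 1 = rank x S (q+1) by omega, hr1]
      exact hin


lemma true_case (x : α) (S : List α) (m : ℕ) (g : ℕ → ℕ) (i : ℕ)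
    (hi1 : 1 ≤ i) (hi2 : i ≤ occ x S)
    (hout : inIm m g (sel x S i) = false) :
    sel x S i = sel1 (markB S.length m g) (sel x (delIm S m g) (rank1 (markBx x S m g) i)) := by
  obtain ⟨hS1, hS2, hS3⟩ := sel_spec x S i hi1 hi2
  have hp1 : 1 ≤ sel x S i := by unfold sel; omega
  set p := sel x S i with hp
  have hbit : (markB S.length m g)[p-1]? = some true := by
    rw [markB_getElem? m g (by omega : p-1 < S.length)]
    rw [show p-1+1 = p by omega, hout]
    rfl
  obtain ⟨hB1, hB2, hB3⟩ := rank_spec true (markB S.length m g) p hp1 hbit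
  set r := rank true (markB S.length m g) p with hr
  set PT := posL true (markB S.length m g) with hPT
  have hPTs : PT.Pairwise (· < ·) := List.Pairwise.filter _ (List.pairwise_lt_range)
  have hmemPT : p - 1 ∈ PT := mem_posL.mpr hbit
  have hrfilter : r = (PT.filter (fun q => decide (q < p))).length := rank_eq_posL true _ p
  have hocc : occ true (markB S.length m g) = PT.length := occ_eq_posL _ _
  have hrlen : r - 1 < PT.length := by omega
  have hgetD : PT.getD (r-1) 0 = p - 1 := by
    have h := getD_filter_lt PT hPTs (p-1) hmemPT
    rw [show p-1+1 = p by omega] at h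
    rw [hrfilter]
    exact h
  have hPTidx : PT[r-1]'hrlen = p - 1 := by
    rw [← List.getD_eq_getElem PT 0 hrlen]; exact hgetD
  have htake : PT.filter (fun q => decide (q < p)) = PT.take r := by
    have h := sorted_filter_lt PT hPTs (r-1) hrlen
    rw [hPTidx, show p-1+1 = p by omega, show r-1+1 = r by omega] at h
    exact h
  have hmemPTn : ∀ q ∈ PT, q < S.length := by
    intro q hq
    have := mem_posL.mp hq
    have := (List.getElem?_eq_some_iff.mp this).1
    rwa [markB_length] at this
  -- D value at r-1
  have hDr : (delIm S m g)[r-1]? = some x := by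
    rw [delIm_eq S m g x, List.getElem?_map, ← hPT, List.getElem?_eq_getElem hrlen,
      Option.map_some, hPTidx]
    obtain ⟨hlt, hval⟩ := List.getElem?_eq_some_iff.mp hS1
    rw [List.getD_eq_getElem _ _ (by omega : p-1 < S.length), hval]
  -- compute k := rank1 (markBx x S m g) i as a canonical filter length
  have hk : rank1 (markBx x S m g) i
      = ((List.range S.length).filter
          (fun q => decide (q < p) &&
            (decide (S[q]? = some x) && ((!inIm m g (q+1)) == true)))).length := by
    show rank true (markBx x S m g) i = _
    rw [rank_eq_posL, posL_true_markBx, List.filter_map, List.length_map]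
    congr 1
    rw [List.filter_congr (q := fun q => decide (q < p))
      (by
        intro q hq
        rw [List.mem_filter, List.mem_range] at hq
        obtain ⟨hqn, hqpred⟩ := hq
        simp only [Bool.and_eq_true, decide_eq_true_eq] at hqpred
        obtain ⟨hqx, _⟩ := hqpred
        simp only [Function.comp]
        rw [decide_eq_decide]
        have hq1 : S[q+1-1]? = some x := by simpa using hqx
        obtain ⟨_, hrq2, _⟩ := rank_spec x S (q+1) (by omega) hq1
        constructor
        · intro hlt
          by_contra hge
          have := rank_strict x S (p := p) (p' := q+1) (by omega) (by omega) hq1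
          omega
        · intro hlt
          have := rank_mono x S (i := q+1) (i' := p) (by omega)
          omega)]
    rw [List.filter_filter]
  -- compute rank x D r as the same filter length
  have hkD : rank x (delIm S m g) r
      = ((List.range S.length).filter
          (fun q => decide (q < p) &&
            (decide (S[q]? = some x) && ((!inIm m g (q+1)) == true)))).length := by
    show ((delIm S m g).take r).count x = _
    rw [delIm_eq S m g x, ← hPT, ← List.map_take, ← htake, List.count_eq_countP,
      List.countP_map, List.countP_eq_length_filter]
    rw [List.filter_congr (q := fun q => decide (S[q]? = some x))
      (by
        intro q hq
        have hqPT : q ∈ PT := List.mem_of_mem_filter hq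
        have hqn : q < S.length := hmemPTn q hqPT
        simp only [Function.comp]
        rw [List.getD_eq_getElem _ _ hqn, List.getElem?_eq_getElem hqn]
        simp [beq_eq_decide])]
    rw [List.filter_filter, hPT, posL_markB, List.filter_filter]
    congr 1
    apply List.filter_congr
    intro q _
    simp only [Bool.and_assoc, Bool.and_left_comm, Bool.and_comm]
  have hkk : rank x (delIm S m g) r = rank1 (markBx x S m g) i := by rw [hk, hkD]
  obtain ⟨hd1, hd2, hd3⟩ := rank_spec x (delIm S m g) r (by omega) hDr
  rw [← hkk, hd1]
  show _ = sel true (markB S.length m g) r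
  rw [hr, hB1]

lemma false_case {C S₁ S₂ : List α} {f g : ℕ → ℕ} (hf : Emb C S₁ f) (hg : Emb C S₂ g)
    (x : α) (i : ℕ) (hi1 : 1 ≤ i) (hi2 : i ≤ occ x S₂)
    (hin : inIm C.length g (sel x S₂ i) = true) :
    sel x S₂ i = sel0 (markB S₂.length C.length g)
      (rank0 (markB S₁.length C.length f)
        (sel x S₁ (sel0 (markBx x S₁ C.length f) (rank0 (markBx x S₂ C.length g) i)))) := by
  obtain ⟨hS1, hS2, hS3⟩ := sel_spec x S₂ i hi1 hi2
  obtain ⟨j, hj1, hj2, hj3⟩ := inIm_iff.mp hin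
  have hCx : C[j-1]? = some x := by rw [hg.2.2 j hj1 hj2, hj3]; exact hS1
  have hi : rank x S₂ (g j) = i := by rw [hj3]; exact hS2
  have h1 : rank0 (markBx x S₂ C.length g) i = rank x C j := by
    rw [← hi]; exact rank0_markBx hg hj1 hj2 hCx
  obtain ⟨hc1, hc2, hc3⟩ := rank_spec x C j hj1 hCx
  have h2 : sel0 (markBx x S₁ C.length f) (rank x C j) = rank x S₁ (f j) := by
    rw [sel0_markBx hf hc2 hc3, hc1]
  have hfb := hf.1 j hj1 hj2
  have hS₁x : S₁[f j - 1]? = some x := by rw [← hf.2.2 j hj1 hj2]; exact hCx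
  obtain ⟨hr1, hr2, hr3⟩ := rank_spec x S₁ (f j) hfb.1 hS₁x
  rw [h1, h2, hr1, rank0_markB hf hj1 hj2, sel0_markB hg hj1 hj2, hj3]


theorem relative_select_main (S₁ S₂ C : List α) (f g : ℕ → ℕ)
    (hf : Emb C S₁ f) (hg : Emb C S₂ g)
    (x : α) (i : ℕ) (hi1 : 1 ≤ i) (hi2 : i ≤ occ x S₂) :
    ((markBx x S₂ C.length g)[i - 1]? = some false →
      sel x S₂ i =
        sel0 (markB S₂.length C.length g)
          (rank0 (markB S₁.length C.length f)
            (sel x S₁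
              (sel0 (markBx x S₁ C.length f)
                (rank0 (markBx x S₂ C.length g) i))))) ∧
    ((markBx x S₂ C.length g)[i - 1]? = some true →
      sel x S₂ i =
        sel1 (markB S₂.length C.length g)
          (sel x (delIm S₂ C.length g) (rank1 (markBx x S₂ C.length g) i))) := by
  have hbit : (markBx x S₂ C.length g)[i-1]? = some (!inIm C.length g (sel x S₂ i)) := by
    rw [markBx_getElem? C.length g (by omega : i-1 < occ x S₂), show i-1+1 = i by omega]
  constructor
  · intro h
    rw [hbit] at h
    have hin : inIm C.length g (sel x S₂ i) = true := by
      cases hh : inIm C.length g (sel x S₂ i)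
      · rw [hh] at h; simp at h
      · rfl
    exact false_case hf hg x i hi1 hi2 hin
  · intro h
    rw [hbit] at h
    have hout : inIm C.length g (sel x S₂ i) = false := by
      cases hh : inIm C.length g (sel x S₂ i)
      · rfl
      · rw [hh] at h; simp at h
    exact true_case x S₂ C.length g i hi1 hi2 hout


end RS
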